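/- If H is a hereditary family of finite sets (closed under taking subsets), then H can be partitioned into pairwise disjoint pairs {A, B} with A ∩ B = ∅, together with the singleton {∅} if |H| is odd. -/

import Mathlib

open Finset

namespace BergeAux

variable {α : Type*} [DecidableEq α]

def IsPairing (f : Finset α → Finset α) (S : Finset (Finset α)) : Prop :=
  ∀ A ∈ S, f A ∈ S ∧ f (f A) = A ∧ f A ≠ A ∧ A ∩ f A = ∅

lemma isPairing_congr {f : Finset α → Finset α} {S T : Finset (Finset α)}
    (h : IsPairing f S) (hST : S = T) : IsPairing f T := hST ▸ h

lemma isPairing_empty (f : Finset α → Finset α) : IsPairing f (∅ : Finset (Finset α)) := by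
  intro A hA; exact absurd hA (notMem_empty A)

lemma insert_inter_empty {n : α} {A B : Finset α} (h : A ∩ B = ∅) (hn : n ∉ B) :
    (insert n A) ∩ B = ∅ := by
  rw [eq_empty_iff_forall_notMem] at h ⊢
  intro x hx
  rw [mem_inter, mem_insert] at hx
  rcases hx with ⟨rfl | hA, hB⟩
  · exact hn hB
  · exact h x (mem_inter.2 ⟨hA, hB⟩)

lemma pair_insert {f : Finset α → Finset α} {S : Finset (Finset α)} {a b : Finset α}
    (hf : IsPairing f S) (ha : a ∉ S) (hb : b ∉ S) (hab : a ≠ b) (hd : a ∩ b = ∅) :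
    IsPairing (fun x => if x = a then b else if x = b then a else f x)
      (insert a (insert b S)) := by
  set F := fun x => if x = a then b else if x = b then a else f x with hF
  have ea : F a = b := by simp only [hF, if_pos rfl]
  have eb : F b = a := by simp [hF, Ne.symm hab]
  have eS : ∀ x, x ∈ S → F x = f x := by
    intro x hx
    simp only [hF]
    rw [if_neg (by rintro rfl; exact ha hx), if_neg (by rintro rfl; exact hb hx)]
  intro A hA
  simp only [mem_insert] at hA
  rcases hA with rfl | rfl | hA
  · rw [ea, eb]
    exact ⟨mem_insert_of_mem (mem_insert_self _ _), rfl, Ne.symm hab, hd⟩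
  · rw [eb, ea]
    exact ⟨mem_insert_self _ _, rfl, hab, by rw [inter_comm]; exact hd⟩
  · obtain ⟨h1, h2, h3, h4⟩ := hf A hA
    rw [eS A hA, eS (f A) h1, h2]
    exact ⟨mem_insert_of_mem (mem_insert_of_mem h1), rfl, h3, h4⟩

lemma pair_erase {f : Finset α → Finset α} {S : Finset (Finset α)} {a : Finset α}
    (hf : IsPairing f S) (ha : a ∈ S) :
    IsPairing f ((S.erase a).erase (f a)) := by
  intro A hA
  have hAfa : A ≠ f a := ne_of_mem_erase hA
  have hAa : A ≠ a := ne_of_mem_erase (mem_of_mem_erase hA)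
  have hAS : A ∈ S := mem_of_mem_erase (mem_of_mem_erase hA)
  obtain ⟨h1, h2, h3, h4⟩ := hf A hAS
  obtain ⟨g1, g2, g3, g4⟩ := hf a ha
  refine ⟨?_, h2, h3, h4⟩
  rw [mem_erase, mem_erase]
  refine ⟨?_, ?_, h1⟩
  · intro h; exact hAa (by rw [← h2, h, g2])
  · intro h; exact hAfa (by rw [← h2, h])

def GoodF (n : α) (S : Finset (Finset α)) : Prop := ∀ A ∈ S, n ∉ A

lemma mem_image_insert {n : α} {S : Finset (Finset α)} (hS : GoodF n S) {B : Finset α} :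
    B ∈ S.image (insert n) ↔ B.erase n ∈ S ∧ n ∈ B := by
  constructor
  · intro h
    obtain ⟨A, hA, rfl⟩ := mem_image.1 h
    rw [erase_insert (hS A hA)]
    exact ⟨hA, mem_insert_self _ _⟩
  · rintro ⟨h1, h2⟩
    exact mem_image.2 ⟨B.erase n, h1, insert_erase h2⟩


lemma goodF_subset {n : α} {S T : Finset (Finset α)} (h : GoodF n S) (hTS : T ⊆ S) :
    GoodF n T := fun A hA => h A (hTS hA)

lemma goodF_erase {n : α} {S : Finset (Finset α)} (h : GoodF n S) (a : Finset α) :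
    GoodF n (S.erase a) := goodF_subset h (erase_subset a S)

lemma decomp2 {n : α} {T₁ T₂ : Finset (Finset α)} {d : Finset α}
    (hd1 : d ∈ T₁) (hd2 : d ∈ T₂) :
    T₁ ∪ T₂ ∪ T₂.image (insert n) =
      insert d (insert (insert n d)
        ((T₁.erase d) ∪ (T₂.erase d) ∪ (T₂.erase d).image (insert n))) := by
  conv_lhs => rw [← insert_erase hd2, ← insert_erase hd1, image_insert]
  ext B
  simp only [mem_insert, mem_union, mem_image]
  tauto

lemma decomp1 {n : α} {T₁ T₂ : Finset (Finset α)} {d : Finset α}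
    (hd1 : d ∈ T₁) :
    T₁ ∪ T₂ ∪ T₂.image (insert n) =
      insert d ((T₁.erase d) ∪ T₂ ∪ T₂.image (insert n)) := by
  conv_lhs => rw [← insert_erase hd1]
  ext B
  simp only [mem_insert, mem_union, mem_image]
  tauto


lemma extend_pd {n : α} {T₁ T₂ : Finset (Finset α)} {d p : Finset α}
    {F' : Finset α → Finset α}
    (hg1 : GoodF n T₁) (hg2 : GoodF n T₂) (hd1 : d ∈ T₁) (hd2 : d ∈ T₂)
    (hnp : n ∈ p) (hpd : p ∩ d = ∅) (hpT : p.erase n ∉ T₂)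
    (hF' : IsPairing F' (insert (insert n d)
      ((T₁.erase d) ∪ (T₂.erase d) ∪ (T₂.erase d).image (insert n)))) :
    ∃ F, IsPairing F (insert p (T₁ ∪ T₂ ∪ T₂.image (insert n))) := by
  have hnd : n ∉ d := hg1 d hd1
  have hT2' : GoodF n (T₂.erase d) := goodF_erase hg2 d
  have hpW : p ∉ insert (insert n d) ((T₁.erase d) ∪ (T₂.erase d) ∪ (T₂.erase d).image (insert n)) := by
    simp only [mem_insert, mem_union]
    push_neg
    refine ⟨?_, ⟨?_, ?_⟩, ?_⟩
    · intro h; apply hpT; rw [h, erase_insert hnd]; exact hd2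
    · intro h; exact (hg1 _ (mem_of_mem_erase h)) hnp
    · intro h; exact (hg2 _ (mem_of_mem_erase h)) hnp
    · intro h; exact hpT (mem_of_mem_erase ((mem_image_insert hT2').1 h).1)
  have hdW : d ∉ insert (insert n d) ((T₁.erase d) ∪ (T₂.erase d) ∪ (T₂.erase d).image (insert n)) := by
    simp only [mem_insert, mem_union]
    push_neg
    refine ⟨?_, ⟨notMem_erase d T₁, notMem_erase d T₂⟩, ?_⟩
    · intro h; exact hnd (h ▸ mem_insert_self n d)
    · intro h; exact hnd ((mem_image_insert hT2').1 h).2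
  have hpd' : p ≠ d := by rintro rfl; exact hnd hnp
  have := pair_insert hF' hpW hdW hpd' hpd
  refine ⟨_, isPairing_congr this ?_⟩
  rw [decomp2 (n := n) hd1 hd2]


def P0 (n : α) (m : ℕ) : Prop :=
  ∀ S₁ S₂ : Finset (Finset α), ∀ φ γ : Finset α → Finset α,
    S₁.card + S₂.card ≤ m → GoodF n S₁ → GoodF n S₂ →
    IsPairing φ S₁ → IsPairing γ S₂ → (S₂ \ S₁).card ≤ 1 →
    ∃ F, IsPairing F ((S₁ ∪ S₂ ∪ S₂.image (insert n)) \ (S₂ \ S₁))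

def P1 (n : α) (m : ℕ) : Prop :=
  ∀ T₁ T₂ : Finset (Finset α), ∀ φ γ : Finset α → Finset α, ∀ d p : Finset α,
    T₁.card + T₂.card ≤ m → GoodF n T₁ → GoodF n T₂ →
    d ∈ T₁ → IsPairing φ (T₁.erase d) → IsPairing γ T₂ → T₂ ⊆ T₁ →
    n ∈ p → p ∩ d = ∅ → p.erase n ∉ T₂ →
    ∃ F, IsPairing F (insert p (T₁ ∪ T₂ ∪ T₂.image (insert n)))

def P2 (n : α) (m : ℕ) : Prop :=
  ∀ T₁ T₂ : Finset (Finset α), ∀ φ γ : Finset α → Finset α, ∀ d p : Finset α,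
    T₁.card + T₂.card ≤ m → GoodF n T₁ → GoodF n T₂ →
    d ∈ T₁ → d ∈ T₂ → IsPairing φ T₁ → IsPairing γ (T₂.erase d) → T₂ ⊆ T₁ →
    n ∈ p → p ∩ d = ∅ → p.erase n ∉ T₂ →
    ∃ F, IsPairing F (insert p (T₁ ∪ T₂ ∪ T₂.image (insert n)))

lemma engine (n : α) (m : ℕ) : P0 n m ∧ P1 n m ∧ P2 n m := by
  induction m with
  | zero =>
    refine ⟨?_, ?_, ?_⟩
    · intro S₁ S₂ φ γ hm hg1 hg2 hφ hγ hsd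
      have h1 : S₁ = ∅ := card_eq_zero.1 (by omega)
      have h2 : S₂ = ∅ := card_eq_zero.1 (by omega)
      subst h1; subst h2
      exact ⟨id, by simpa using isPairing_empty id⟩
    · intro T₁ T₂ φ γ d p hm hg1 hg2 hd1 hφ hγ hsub hnp hpd hpT
      have : T₁.card ≠ 0 := card_ne_zero_of_mem hd1
      omega
    · intro T₁ T₂ φ γ d p hm hg1 hg2 hd1 hd2 hφ hγ hsub hnp hpd hpT
      have : T₁.card ≠ 0 := card_ne_zero_of_mem hd1
      omega
  | succ m ih =>
    obtain ⟨ih0, ih1, ih2⟩ := ih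
    have hP2 : P2 n (m + 1) := by
      intro T₁ T₂ φ γ d p hm hg1 hg2 hd1 hd2 hφ hγ hsub hnp hpd hpT
      obtain ⟨hd3T, hffd, hd3ne, hdint⟩ := hφ d hd1
      have hnd : n ∉ d := hg1 d hd1
      have hnd₃ : n ∉ φ d := hg1 (φ d) hd3T
      have hT2' : GoodF n (T₂.erase d) := goodF_erase hg2 d
      obtain ⟨F', hF'⟩ := ih1 (T₁.erase d) (T₂.erase d) φ γ (φ d) (insert n d)
        (by
          have h1 := card_erase_of_mem hd1
          have h2 := card_erase_of_mem hd2
          have h3 : 0 < T₁.card := card_pos.2 ⟨d, hd1⟩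
          have h4 : 0 < T₂.card := card_pos.2 ⟨d, hd2⟩
          omega)
        (goodF_erase hg1 d) hT2'
        (mem_erase.2 ⟨hd3ne, hd3T⟩)
        (pair_erase hφ hd1)
        hγ
        (fun A hA => mem_erase.2 ⟨ne_of_mem_erase hA, hsub (mem_of_mem_erase hA)⟩)
        (mem_insert_self n d)
        (insert_inter_empty hdint hnd₃)
        (by rw [erase_insert hnd]; exact notMem_erase d T₂)
      exact extend_pd hg1 hg2 hd1 hd2 hnp hpd hpT hF'
    have hP1 : P1 n (m + 1) := by
      intro T₁ T₂ φ γ d p hm hg1 hg2 hd1 hφ hγ hsub hnp hpd hpT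
      by_cases hd2 : d ∈ T₂
      · obtain ⟨hd2T, hffd, hd2ne, hdint⟩ := hγ d hd2
        have hnd : n ∉ d := hg1 d hd1
        have hnd₂ : n ∉ γ d := hg2 (γ d) hd2T
        obtain ⟨F', hF'⟩ := ih2 (T₁.erase d) (T₂.erase d) φ γ (γ d) (insert n d)
          (by
            have h1 := card_erase_of_mem hd1
            have h2 := card_erase_of_mem hd2
            have h3 : 0 < T₁.card := card_pos.2 ⟨d, hd1⟩
            have h4 : 0 < T₂.card := card_pos.2 ⟨d, hd2⟩
            omega)
          (goodF_erase hg1 d) (goodF_erase hg2 d)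
          (mem_erase.2 ⟨hd2ne, hsub hd2T⟩)
          (mem_erase.2 ⟨hd2ne, hd2T⟩)
          hφ
          (pair_erase hγ hd2)
          (fun A hA => mem_erase.2 ⟨ne_of_mem_erase hA, hsub (mem_of_mem_erase hA)⟩)
          (mem_insert_self n d)
          (insert_inter_empty hdint hnd₂)
          (by rw [erase_insert hnd]; exact notMem_erase d T₂)
        exact extend_pd hg1 hg2 hd1 hd2 hnp hpd hpT hF'
      · have hsd : T₂ \ (T₁.erase d) = ∅ := by
          rw [sdiff_eq_empty_iff_subset]
          intro x hx
          exact mem_erase.2 ⟨by rintro rfl; exact hd2 hx, hsub hx⟩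
        obtain ⟨F', hF'⟩ := ih0 (T₁.erase d) T₂ φ γ
          (by
            have h1 := card_erase_of_mem hd1
            have h3 : 0 < T₁.card := card_pos.2 ⟨d, hd1⟩
            omega)
          (goodF_erase hg1 d) hg2 hφ hγ (by rw [hsd]; simp)
        rw [hsd, sdiff_empty] at hF'
        have hnd : n ∉ d := hg1 d hd1
        have hpU : p ∉ (T₁.erase d) ∪ T₂ ∪ T₂.image (insert n) := by
          simp only [mem_union]
          push_neg
          refine ⟨⟨?_, ?_⟩, ?_⟩
          · intro h; exact (hg1 _ (mem_of_mem_erase h)) hnp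
          · intro h; exact (hg2 _ h) hnp
          · intro h; exact hpT ((mem_image_insert hg2).1 h).1
        have hdU : d ∉ (T₁.erase d) ∪ T₂ ∪ T₂.image (insert n) := by
          simp only [mem_union]
          push_neg
          refine ⟨⟨notMem_erase d T₁, hd2⟩, ?_⟩
          · intro h; exact hnd ((mem_image_insert hg2).1 h).2
        have hpd' : p ≠ d := by rintro rfl; exact hnd hnp
        have := pair_insert hF' hpU hdU hpd' hpd
        refine ⟨_, isPairing_congr this ?_⟩
        rw [decomp1 (n := n) (T₂ := T₂) hd1]
    have hP0 : P0 n (m + 1) := by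
      intro S₁ S₂ φ γ hm hg1 hg2 hφ hγ hsd
      by_cases hne : (S₂ \ S₁).Nonempty
      · -- Case A: start the walk at the unique element e₀ of S₂ \ S₁, pairing (insert n e₀) with γ e₀
        obtain ⟨e₀, he₀⟩ := hne
        obtain ⟨he₀2, he₀1⟩ := mem_sdiff.1 he₀
        have hsdeq : S₂ \ S₁ = {e₀} := by
          apply Finset.eq_singleton_iff_unique_mem.2
          exact ⟨he₀, fun x hx => card_le_one.1 hsd x hx e₀ he₀⟩
        obtain ⟨hA1S₂, hγe₀, hA1ne, he₀int⟩ := hγ e₀ he₀2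
        have hA1S₁ : γ e₀ ∈ S₁ := by
          by_contra h
          have h2 : γ e₀ ∈ S₂ \ S₁ := mem_sdiff.2 ⟨hA1S₂, h⟩
          rw [hsdeq, mem_singleton] at h2
          exact hA1ne h2
        obtain ⟨hdS₁, hφA1, hdne, hA1int⟩ := hφ (γ e₀) hA1S₁
        have hne₀ : n ∉ e₀ := hg2 e₀ he₀2
        have hnA1 : n ∉ γ e₀ := hg2 _ hA1S₂
        have hA1mem : γ e₀ ∈ S₂.erase e₀ := mem_erase.2 ⟨hA1ne, hA1S₂⟩
        have hgT₂ : GoodF n ((S₂.erase e₀).erase (γ e₀)) :=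
          goodF_erase (goodF_erase hg2 e₀) (γ e₀)
        obtain ⟨F', hF'⟩ := ih1 (S₁.erase (γ e₀)) ((S₂.erase e₀).erase (γ e₀)) φ γ
            (φ (γ e₀)) (insert n (γ e₀))
          (by
            have h1 := card_erase_of_mem hA1S₁
            have h2 := card_erase_of_mem he₀2
            have h3 := card_erase_of_mem hA1mem
            have h4 : 0 < S₁.card := card_pos.2 ⟨_, hA1S₁⟩
            have h5 : 0 < (S₂.erase e₀).card := card_pos.2 ⟨_, hA1mem⟩
            omega)
          (goodF_erase hg1 _) hgT₂
          (mem_erase.2 ⟨hdne, hdS₁⟩)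
          (pair_erase hφ hA1S₁)
          (pair_erase hγ he₀2)
          (by
            intro x hx
            have hx1 := ne_of_mem_erase hx
            have hx' := mem_of_mem_erase hx
            have hxe := ne_of_mem_erase hx'
            have hxS₂ := mem_of_mem_erase hx'
            have hxS₁ : x ∈ S₁ := by
              by_contra h
              have h2 : x ∈ S₂ \ S₁ := mem_sdiff.2 ⟨hxS₂, h⟩
              rw [hsdeq, mem_singleton] at h2
              exact hxe h2
            exact mem_erase.2 ⟨hx1, hxS₁⟩)
          (mem_insert_self n _)
          (insert_inter_empty hA1int (hg1 _ hdS₁))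
          (by rw [erase_insert hnA1]; exact notMem_erase _ _)
        have hqW : insert n e₀ ∉ insert (insert n (γ e₀))
            ((S₁.erase (γ e₀)) ∪ ((S₂.erase e₀).erase (γ e₀)) ∪
              ((S₂.erase e₀).erase (γ e₀)).image (insert n)) := by
          simp only [mem_insert, mem_union]
          push_neg
          refine ⟨?_, ⟨?_, ?_⟩, ?_⟩
          · intro h
            have := congrArg (fun t => Finset.erase t n) h
            simp only [erase_insert hne₀, erase_insert hnA1] at this
            exact hA1ne this.symm
          · intro h; exact (hg1 _ (mem_of_mem_erase h)) (mem_insert_self n e₀)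
          · intro h; exact (hgT₂ _ h) (mem_insert_self n e₀)
          · intro h
            have h2 := (mem_image_insert hgT₂).1 h
            rw [erase_insert hne₀] at h2
            exact ne_of_mem_erase (mem_of_mem_erase h2.1) rfl
        have hbW : γ e₀ ∉ insert (insert n (γ e₀))
            ((S₁.erase (γ e₀)) ∪ ((S₂.erase e₀).erase (γ e₀)) ∪
              ((S₂.erase e₀).erase (γ e₀)).image (insert n)) := by
          simp only [mem_insert, mem_union]
          push_neg
          refine ⟨?_, ⟨notMem_erase _ _, notMem_erase _ _⟩, ?_⟩
          · intro h; exact hnA1 (h ▸ mem_insert_self n (γ e₀))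
          · intro h; exact hnA1 ((mem_image_insert hgT₂).1 h).2
        have hqb : insert n e₀ ≠ γ e₀ := by
          intro h; exact hnA1 (h ▸ mem_insert_self n e₀)
        have hqint : (insert n e₀) ∩ (γ e₀) = ∅ := insert_inter_empty he₀int hnA1
        refine ⟨_, isPairing_congr (pair_insert hF' hqW hbW hqb hqint) ?_⟩
        rw [hsdeq]
        ext B
        simp only [mem_insert, mem_union, mem_sdiff, mem_singleton, mem_erase,
          mem_image_insert hgT₂, mem_image_insert hg2, or_assoc]
        constructor
        · rintro (rfl | rfl | rfl | (⟨h1, h2⟩ | ⟨h1, h2, h3⟩ | ⟨⟨h1, h2, h3⟩, h4⟩))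
          · refine ⟨Or.inr (Or.inr ⟨by rw [erase_insert hne₀]; exact he₀2, mem_insert_self n e₀⟩), ?_⟩
            intro h; exact hne₀ (h ▸ mem_insert_self n e₀)
          · exact ⟨Or.inl hA1S₁, hA1ne⟩
          · refine ⟨Or.inr (Or.inr ⟨by rw [erase_insert hnA1]; exact hA1S₂, mem_insert_self n (γ e₀)⟩), ?_⟩
            intro h; exact hne₀ (h ▸ mem_insert_self n (γ e₀))
          · exact ⟨Or.inl h2, by rintro rfl; exact he₀1 h2⟩
          · exact ⟨Or.inr (Or.inl h3), h2⟩
          · exact ⟨Or.inr (Or.inr ⟨h3, h4⟩), by rintro rfl; exact hne₀ h4⟩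
        · rintro ⟨(h | h | ⟨h1, h2⟩), hBe⟩
          · by_cases hBA1 : B = γ e₀
            · exact Or.inr (Or.inl hBA1)
            · exact Or.inr (Or.inr (Or.inr (Or.inl ⟨hBA1, h⟩)))
          · by_cases hBA1 : B = γ e₀
            · exact Or.inr (Or.inl hBA1)
            · exact Or.inr (Or.inr (Or.inr (Or.inr (Or.inl ⟨hBA1, hBe, h⟩))))
          · by_cases he : B.erase n = e₀
            · left
              rw [← he, insert_erase h2]
            · by_cases hA1' : B.erase n = γ e₀
              · right; right; left
                rw [← hA1', insert_erase h2]
              · exact Or.inr (Or.inr (Or.inr (Or.inr (Or.inr ⟨⟨hA1', he, h1⟩, h2⟩))))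
      · -- S₂ ⊆ S₁
        have hsub21 : S₂ ⊆ S₁ := by
          rw [not_nonempty_iff_eq_empty] at hne
          exact sdiff_eq_empty_iff_subset.1 hne
        rw [not_nonempty_iff_eq_empty] at hne
        rw [hne, sdiff_empty]
        by_cases hsub12 : S₁ ⊆ S₂
        · -- Case C: S₁ = S₂, use the uniform rule
          have heq : S₁ = S₂ := Subset.antisymm hsub12 hsub21
          subst heq
          rw [union_self]
          refine ⟨fun C => if n ∈ C then γ (C.erase n) else insert n (γ C), ?_⟩
          have key : ∀ C, (fun C => if n ∈ C then γ (C.erase n) else insert n (γ C)) C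
              = if n ∈ C then γ (C.erase n) else insert n (γ C) := fun C => rfl
          intro A hA
          rcases mem_union.1 hA with hA2 | hAi
          · have hnA : n ∉ A := hg1 A hA2
            obtain ⟨hγA, hγγ, hγne, hint⟩ := hγ A hA2
            have hnγA : n ∉ γ A := hg1 _ hγA
            rw [key A, if_neg hnA]
            refine ⟨?_, ?_, ?_, ?_⟩
            · exact mem_union.2 (Or.inr (mem_image.2 ⟨γ A, hγA, rfl⟩))
            · rw [key _, if_pos (mem_insert_self n (γ A)), erase_insert hnγA, hγγ]
            · intro h; exact hnA (h ▸ mem_insert_self n (γ A))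
            · rw [inter_comm]; exact insert_inter_empty (by rw [inter_comm]; exact hint) hnA
          · obtain ⟨hAe, hnA⟩ := (mem_image_insert hg1).1 hAi
            obtain ⟨hγA, hγγ, hγne, hint⟩ := hγ _ hAe
            have hnγA : n ∉ γ (A.erase n) := hg1 _ hγA
            rw [key A, if_pos hnA]
            refine ⟨?_, ?_, ?_, ?_⟩
            · exact mem_union.2 (Or.inl hγA)
            · rw [key _, if_neg hnγA, hγγ, insert_erase hnA]
            · intro h; exact hnγA (by rw [h]; exact hnA)
            · rw [eq_empty_iff_forall_notMem]
              intro x hx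
              rw [mem_inter] at hx
              have hxn : x ≠ n := by rintro rfl; exact hnγA hx.2
              have hmm : x ∈ A.erase n ∩ γ (A.erase n) :=
                mem_inter.2 ⟨mem_erase.2 ⟨hxn, hx.1⟩, hx.2⟩
              rw [hint] at hmm
              exact notMem_empty x hmm
        · -- Case B: start the walk at A₀ ∈ S₁ \ S₂
          obtain ⟨A₀, hA₀S₁, hA₀S₂⟩ := Finset.not_subset.1 hsub12
          obtain ⟨hφA₀S₁, hφφ, hφne, hφint⟩ := hφ A₀ hA₀S₁
          have hnA₀ : n ∉ A₀ := hg1 A₀ hA₀S₁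
          have hnA₁ : n ∉ φ A₀ := hg1 _ hφA₀S₁
          have hA₁mem : φ A₀ ∈ S₁.erase A₀ := mem_erase.2 ⟨hφne, hφA₀S₁⟩
          by_cases hA1S₂ : φ A₀ ∈ S₂
          · -- B2: φ A₀ ∈ S₂, continue the walk
            obtain ⟨hdS₂, hγφ, hγne, hγint⟩ := hγ (φ A₀) hA1S₂
            have hT₂good : GoodF n (S₂.erase (φ A₀)) := goodF_erase hg2 _
            obtain ⟨F', hF'⟩ := ih2 ((S₁.erase A₀).erase (φ A₀)) (S₂.erase (φ A₀)) φ γ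
                (γ (φ A₀)) (insert n (φ A₀))
              (by
                have h1 := card_erase_of_mem hA₀S₁
                have h2 := card_erase_of_mem hA₁mem
                have h3 := card_erase_of_mem hA1S₂
                have h4 : 0 < S₁.card := card_pos.2 ⟨_, hA₀S₁⟩
                have h5 : 0 < (S₁.erase A₀).card := card_pos.2 ⟨_, hA₁mem⟩
                have h6 : 0 < S₂.card := card_pos.2 ⟨_, hA1S₂⟩
                omega)
              (goodF_erase (goodF_erase hg1 _) _) hT₂good
              (by
                refine mem_erase.2 ⟨hγne, mem_erase.2 ⟨?_, hsub21 hdS₂⟩⟩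
                intro h; exact hA₀S₂ (h ▸ hdS₂))
              (mem_erase.2 ⟨hγne, hdS₂⟩)
              (pair_erase hφ hA₀S₁)
              (pair_erase hγ hA1S₂)
              (by
                intro x hx
                have hx1 := ne_of_mem_erase hx
                have hxS₂ := mem_of_mem_erase hx
                refine mem_erase.2 ⟨hx1, mem_erase.2 ⟨?_, hsub21 hxS₂⟩⟩
                rintro rfl; exact hA₀S₂ hxS₂)
              (mem_insert_self n _)
              (insert_inter_empty hγint (hg2 _ hdS₂))
              (by rw [erase_insert hnA₁]; exact notMem_erase _ _)
            have hqW : A₀ ∉ insert (insert n (φ A₀))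
                (((S₁.erase A₀).erase (φ A₀)) ∪ (S₂.erase (φ A₀)) ∪
                  (S₂.erase (φ A₀)).image (insert n)) := by
              simp only [mem_insert, mem_union]
              push_neg
              refine ⟨?_, ⟨?_, ?_⟩, ?_⟩
              · intro h; exact hnA₀ (h ▸ mem_insert_self n (φ A₀))
              · intro h; exact notMem_erase A₀ S₁ (mem_of_mem_erase h)
              · intro h; exact hA₀S₂ (mem_of_mem_erase h)
              · intro h; exact hnA₀ ((mem_image_insert hT₂good).1 h).2
            have hbW : φ A₀ ∉ insert (insert n (φ A₀))
                (((S₁.erase A₀).erase (φ A₀)) ∪ (S₂.erase (φ A₀)) ∪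
                  (S₂.erase (φ A₀)).image (insert n)) := by
              simp only [mem_insert, mem_union]
              push_neg
              refine ⟨?_, ⟨notMem_erase _ _, notMem_erase _ _⟩, ?_⟩
              · intro h; exact hnA₁ (h ▸ mem_insert_self n (φ A₀))
              · intro h; exact hnA₁ ((mem_image_insert hT₂good).1 h).2
            refine ⟨_, isPairing_congr (pair_insert hF' hqW hbW (Ne.symm hφne) hφint) ?_⟩
            ext B
            simp only [mem_insert, mem_union, mem_erase,
              mem_image_insert hT₂good, mem_image_insert hg2, or_assoc]
            constructor
            · rintro (rfl | rfl | rfl | (⟨h1, h2, h3⟩ | ⟨h1, h2⟩ | ⟨⟨h1, h2⟩, h3⟩))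
              · exact Or.inl hA₀S₁
              · exact Or.inl hφA₀S₁
              · exact Or.inr (Or.inr ⟨by rw [erase_insert hnA₁]; exact hA1S₂, mem_insert_self n _⟩)
              · exact Or.inl h3
              · exact Or.inr (Or.inl h2)
              · exact Or.inr (Or.inr ⟨h2, h3⟩)
            · rintro (h | h | ⟨h1, h2⟩)
              · by_cases hB0 : B = A₀
                · exact Or.inl hB0
                · by_cases hB1 : B = φ A₀
                  · exact Or.inr (Or.inl hB1)
                  · exact Or.inr (Or.inr (Or.inr (Or.inl ⟨hB1, hB0, h⟩)))
              · by_cases hB1 : B = φ A₀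
                · exact Or.inr (Or.inl hB1)
                · exact Or.inr (Or.inr (Or.inr (Or.inr (Or.inl ⟨hB1, h⟩))))
              · by_cases hB1 : B.erase n = φ A₀
                · right; right; left
                  rw [← hB1, insert_erase h2]
                · exact Or.inr (Or.inr (Or.inr (Or.inr (Or.inr ⟨⟨hB1, h1⟩, h2⟩))))
          · -- B1: isolated φ-edge, just remove it
            have hsd2 : S₂ \ ((S₁.erase A₀).erase (φ A₀)) = ∅ := by
              rw [sdiff_eq_empty_iff_subset]
              intro x hx
              refine mem_erase.2 ⟨?_, mem_erase.2 ⟨?_, hsub21 hx⟩⟩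
              · rintro rfl; exact hA1S₂ hx
              · rintro rfl; exact hA₀S₂ hx
            obtain ⟨F', hF'⟩ := ih0 ((S₁.erase A₀).erase (φ A₀)) S₂ φ γ
              (by
                have h1 := card_erase_of_mem hA₀S₁
                have h2 := card_erase_of_mem hA₁mem
                have h4 : 0 < S₁.card := card_pos.2 ⟨_, hA₀S₁⟩
                have h5 : 0 < (S₁.erase A₀).card := card_pos.2 ⟨_, hA₁mem⟩
                omega)
              (goodF_erase (goodF_erase hg1 _) _) hg2
              (pair_erase hφ hA₀S₁) hγ (by rw [hsd2]; simp)
            rw [hsd2, sdiff_empty] at hF'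
            have hqW : A₀ ∉ ((S₁.erase A₀).erase (φ A₀)) ∪ S₂ ∪ S₂.image (insert n) := by
              simp only [mem_union]
              push_neg
              refine ⟨⟨?_, hA₀S₂⟩, ?_⟩
              · intro h; exact notMem_erase A₀ S₁ (mem_of_mem_erase h)
              · intro h; exact hnA₀ ((mem_image_insert hg2).1 h).2
            have hbW : φ A₀ ∉ ((S₁.erase A₀).erase (φ A₀)) ∪ S₂ ∪ S₂.image (insert n) := by
              simp only [mem_union]
              push_neg
              refine ⟨⟨notMem_erase _ _, hA1S₂⟩, ?_⟩
              · intro h; exact hnA₁ ((mem_image_insert hg2).1 h).2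
            refine ⟨_, isPairing_congr (pair_insert hF' hqW hbW (Ne.symm hφne) hφint) ?_⟩
            ext B
            simp only [mem_insert, mem_union, mem_erase, or_assoc]
            constructor
            · rintro (rfl | rfl | (⟨h1, h2, h3⟩ | h | h))
              · exact Or.inl hA₀S₁
              · exact Or.inl hφA₀S₁
              · exact Or.inl h3
              · exact Or.inr (Or.inl h)
              · exact Or.inr (Or.inr h)
            · rintro (h | h | h)
              · by_cases hB0 : B = A₀
                · exact Or.inl hB0
                · by_cases hB1 : B = φ A₀
                  · exact Or.inr (Or.inl hB1)
                  · exact Or.inr (Or.inr (Or.inl ⟨hB1, hB0, h⟩))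
              · exact Or.inr (Or.inr (Or.inr (Or.inl h)))
              · exact Or.inr (Or.inr (Or.inr (Or.inr h)))
    exact ⟨hP0, hP1, hP2⟩

lemma hereditary_empty_mem {H : Finset (Finset α)} (hH : ∀ A ∈ H, ∀ B ⊆ A, B ∈ H)
    (h : H.Nonempty) : ∅ ∈ H := by
  obtain ⟨A, hA⟩ := h
  exact hH A hA ∅ (empty_subset A)

lemma main (s : Finset α) : ∀ H : Finset (Finset α), (∀ A ∈ H, A ⊆ s) →
    (∀ A ∈ H, ∀ B ⊆ A, B ∈ H) →
    ∃ f : Finset α → Finset α, IsPairing f (if H.card % 2 = 1 then H.erase ∅ else H) := by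
  induction s using Finset.induction_on with
  | empty =>
    intro H hbound hH
    have hsub : H ⊆ {∅} := by
      intro A hA
      rw [mem_singleton]
      exact subset_empty.1 (hbound A hA)
    rcases subset_singleton_iff.1 hsub with rfl | rfl
    · refine ⟨id, ?_⟩
      rw [if_neg (by simp)]
      exact isPairing_empty id
    · refine ⟨id, ?_⟩
      rw [if_pos (by simp)]
      rw [erase_singleton]
      exact isPairing_empty id
  | @insert n s' hns ih =>
    intro H hbound hH
    set H0 := H.filter (fun A => n ∉ A) with hH0def
    set D := H0.filter (fun A => insert n A ∈ H) with hDdef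
    have hH0 : ∀ {A : Finset α}, A ∈ H0 ↔ A ∈ H ∧ n ∉ A := by
      intro A; rw [hH0def, mem_filter]
    have hD : ∀ {A : Finset α}, A ∈ D ↔ (A ∈ H ∧ n ∉ A) ∧ insert n A ∈ H := by
      intro A; rw [hDdef, mem_filter, hH0]
    have hDsub : D ⊆ H0 := filter_subset _ _
    have hgood0 : GoodF n H0 := fun A hA => (hH0.1 hA).2
    have hgoodD : GoodF n D := fun A hA => (hD.1 hA).1.2
    have hbound0 : ∀ A ∈ H0, A ⊆ s' := by
      intro A hA x hx
      have h2 := hbound A (hH0.1 hA).1 hx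
      rcases mem_insert.1 h2 with rfl | h3
      · exact absurd hx (hH0.1 hA).2
      · exact h3
    have hered0 : ∀ A ∈ H0, ∀ B ⊆ A, B ∈ H0 := by
      intro A hA B hBA
      exact hH0.2 ⟨hH A (hH0.1 hA).1 B hBA, fun hn => (hH0.1 hA).2 (hBA hn)⟩
    have hboundD : ∀ A ∈ D, A ⊆ s' := fun A hA => hbound0 A (hDsub hA)
    have heredD : ∀ A ∈ D, ∀ B ⊆ A, B ∈ D := by
      intro A hA B hBA
      refine hD.2 ⟨⟨hH A (hD.1 hA).1.1 B hBA, fun hn => (hD.1 hA).1.2 (hBA hn)⟩, ?_⟩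
      exact hH _ (hD.1 hA).2 _ (insert_subset_insert n hBA)
    have hdecomp : H = H0 ∪ D.image (insert n) := by
      ext A
      constructor
      · intro hA
        by_cases hn : n ∈ A
        · refine mem_union.2 (Or.inr (mem_image.2 ⟨A.erase n, ?_, insert_erase hn⟩))
          refine hD.2 ⟨⟨hH A hA _ (erase_subset n A), notMem_erase n A⟩, ?_⟩
          rw [insert_erase hn]; exact hA
        · exact mem_union.2 (Or.inl (hH0.2 ⟨hA, hn⟩))
      · intro hA
        rcases mem_union.1 hA with h | h
        · exact (hH0.1 h).1
        · obtain ⟨B, hB, rfl⟩ := mem_image.1 h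
          exact (hD.1 hB).2
    have hdisj : Disjoint H0 (D.image (insert n)) := by
      rw [disjoint_left]
      intro A hA hA2
      exact (hH0.1 hA).2 ((mem_image_insert hgoodD).1 hA2).2
    have hcard : H.card = H0.card + D.card := by
      rw [hdecomp, card_union_of_disjoint hdisj, card_image_of_injOn]
      intro A hA B hB himg
      have h2 := congrArg (fun t => Finset.erase t n) himg
      simp only [erase_insert (hgoodD A hA), erase_insert (hgoodD B hB)] at h2
      exact h2
    obtain ⟨φ, hφ⟩ := ih H0 hbound0 hered0
    obtain ⟨γ, hγ⟩ := ih D hboundD heredD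
    rcases Nat.mod_two_eq_zero_or_one H0.card with h0 | h0 <;>
      rcases Nat.mod_two_eq_zero_or_one D.card with hD2 | hD2
    · -- (even, even)
      rw [if_neg (by omega)] at hφ
      rw [if_neg (by omega)] at hγ
      have hsd0 : D \ H0 = ∅ := sdiff_eq_empty_iff_subset.2 hDsub
      obtain ⟨F, hF⟩ := (engine n (H0.card + D.card)).1 H0 D φ γ le_rfl hgood0 hgoodD hφ hγ
        (by rw [hsd0]; simp)
      rw [if_neg (by omega)]
      refine ⟨F, isPairing_congr hF ?_⟩
      rw [hsd0, sdiff_empty, union_eq_left.2 hDsub]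
      exact hdecomp.symm
    · -- (even, odd) : the matching on H0 pairs ∅ with C₀ := φ ∅; remove that pair,
      -- run the engine, and finish by pairing C₀ with {n}
      rw [if_neg (by omega)] at hφ
      rw [if_pos hD2] at hγ
      have hDne : D.Nonempty := card_pos.1 (by omega)
      have hED : ∅ ∈ D := hereditary_empty_mem heredD hDne
      have hEH0 : ∅ ∈ H0 := hDsub hED
      obtain ⟨hC₀H0, hφC₀, hC₀ne, -⟩ := hφ ∅ hEH0
      have hgD' : GoodF n (D.erase ∅) := goodF_erase hgoodD ∅
      have hsd : (D.erase ∅) \ ((H0.erase ∅).erase (φ ∅)) ⊆ {φ ∅} := by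
        intro x hx
        obtain ⟨hx1, hx2⟩ := mem_sdiff.1 hx
        have hxD := mem_of_mem_erase hx1
        have hxne := ne_of_mem_erase hx1
        rw [mem_singleton]
        by_contra hc
        exact hx2 (mem_erase.2 ⟨hc, mem_erase.2 ⟨hxne, hDsub hxD⟩⟩)
      obtain ⟨F, hF⟩ := (engine n (((H0.erase ∅).erase (φ ∅)).card + (D.erase ∅).card)).1
        ((H0.erase ∅).erase (φ ∅)) (D.erase ∅) φ γ le_rfl
        (goodF_erase (goodF_erase hgood0 ∅) (φ ∅)) hgD'
        (pair_erase hφ hEH0) hγ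
        (le_trans (card_le_card hsd) (by simp))
      have hid1 : (((H0.erase ∅).erase (φ ∅)) ∪ (D.erase ∅) ∪ (D.erase ∅).image (insert n))
          \ ((D.erase ∅) \ ((H0.erase ∅).erase (φ ∅)))
          = ((H0.erase ∅).erase (φ ∅)) ∪ (D.erase ∅).image (insert n) := by
        ext B
        constructor
        · intro hB
          obtain ⟨hB1, hB2⟩ := mem_sdiff.1 hB
          rcases mem_union.1 hB1 with h | h
          · rcases mem_union.1 h with h' | h'
            · exact mem_union.2 (Or.inl h')
            · by_cases hc : B ∈ (H0.erase ∅).erase (φ ∅)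
              · exact mem_union.2 (Or.inl hc)
              · exact absurd (mem_sdiff.2 ⟨h', hc⟩) hB2
          · exact mem_union.2 (Or.inr h)
        · intro hB
          rcases mem_union.1 hB with h | h
          · exact mem_sdiff.2 ⟨mem_union.2 (Or.inl (mem_union.2 (Or.inl h))),
              fun hc => (mem_sdiff.1 hc).2 h⟩
          · refine mem_sdiff.2 ⟨mem_union.2 (Or.inr h), ?_⟩
            intro hc
            have h2 := (mem_sdiff.1 hc).1
            exact hgD' B h2 ((mem_image_insert hgD').1 h).2
      rw [hid1] at hF
      have hC₀img : φ ∅ ∉ (D.erase ∅).image (insert n) := by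
        intro h
        exact (hgood0 _ hC₀H0) ((mem_image_insert hgD').1 h).2
      have haY : φ ∅ ∉ ((H0.erase ∅).erase (φ ∅)) ∪ (D.erase ∅).image (insert n) := by
        rw [mem_union]
        push_neg
        exact ⟨notMem_erase _ _, hC₀img⟩
      have hbY : insert n ∅ ∉ ((H0.erase ∅).erase (φ ∅)) ∪ (D.erase ∅).image (insert n) := by
        rw [mem_union]
        push_neg
        constructor
        · intro h
          exact (goodF_erase (goodF_erase hgood0 ∅) (φ ∅)) _ h (mem_insert_self n ∅)
        · intro h
          have h2 := ((mem_image_insert hgD').1 h).1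
          rw [erase_insert (notMem_empty n)] at h2
          exact notMem_erase ∅ D h2
      have hab : φ ∅ ≠ insert n ∅ := by
        intro h
        exact (hgood0 _ hC₀H0) (h ▸ mem_insert_self n ∅)
      have hint : φ ∅ ∩ insert n ∅ = ∅ := by
        rw [inter_comm]
        exact insert_inter_empty (empty_inter _) (hgood0 _ hC₀H0)
      rw [if_pos (by omega)]
      refine ⟨_, isPairing_congr (pair_insert hF haY hbY hab hint) ?_⟩
      ext B
      simp only [mem_insert, mem_union, mem_erase, mem_image_insert hgD',
        mem_image_insert hgoodD, or_assoc]
      constructor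
      · rintro (rfl | rfl | (⟨h1, h2, h3⟩ | ⟨⟨h1, h2⟩, h3⟩))
        · refine ⟨hC₀ne, ?_⟩
          rw [hdecomp]
          exact mem_union.2 (Or.inl hC₀H0)
        · refine ⟨?_, ?_⟩
          · intro h
            exact notMem_empty n (h ▸ mem_insert_self n ∅)
          · rw [hdecomp]
            refine mem_union.2 (Or.inr (mem_image.2 ⟨∅, hED, rfl⟩))
        · refine ⟨h2, ?_⟩
          rw [hdecomp]
          exact mem_union.2 (Or.inl h3)
        · refine ⟨?_, ?_⟩
          · rintro rfl
            exact notMem_empty n h3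
          · rw [hdecomp]
            exact mem_union.2 (Or.inr (mem_image.2 ⟨B.erase n, h2, insert_erase h3⟩))
      · rintro ⟨hne, hBH⟩
        rw [hdecomp] at hBH
        rcases mem_union.1 hBH with h | h
        · by_cases hc : B = φ ∅
          · exact Or.inl hc
          · exact Or.inr (Or.inr (Or.inl ⟨hc, hne, h⟩))
        · obtain ⟨hBe, hBn⟩ := (mem_image_insert hgoodD).1 h
          by_cases hc : B.erase n = ∅
          · refine Or.inr (Or.inl ?_)
            rw [← hc, insert_erase hBn]
          · exact Or.inr (Or.inr (Or.inr ⟨⟨hc, hBe⟩, hBn⟩))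
    · -- (odd, even)
      rw [if_pos h0] at hφ
      rw [if_neg (by omega)] at hγ
      by_cases hDe : D = ∅
      · have hHeq : H = H0 := by
          rw [hdecomp, hDe]
          simp
        rw [if_pos (by omega), hHeq]
        exact ⟨φ, hφ⟩
      · have hDne : D.Nonempty := nonempty_iff_ne_empty.2 hDe
        have hED : ∅ ∈ D := hereditary_empty_mem heredD hDne
        have hsd : D \ (H0.erase ∅) = {∅} := by
          ext x
          simp only [mem_sdiff, mem_erase, mem_singleton]
          constructor
          · rintro ⟨hx, h2⟩
            by_contra hne2
            exact h2 ⟨hne2, hDsub hx⟩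
          · rintro rfl
            exact ⟨hED, fun h => h.1 rfl⟩
        obtain ⟨F, hF⟩ := (engine n ((H0.erase ∅).card + D.card)).1 (H0.erase ∅) D φ γ le_rfl
          (goodF_erase hgood0 ∅) hgoodD hφ hγ (by rw [hsd]; simp)
        rw [hsd] at hF
        rw [if_pos (by omega)]
        refine ⟨F, isPairing_congr hF ?_⟩
        ext B
        simp only [mem_sdiff, mem_union, mem_erase, mem_singleton,
          mem_image_insert hgoodD, or_assoc]
        constructor
        · rintro ⟨(⟨h1, h2⟩ | h | ⟨h1, h2⟩), hne⟩
          · exact ⟨hne, by rw [hdecomp]; exact mem_union.2 (Or.inl h2)⟩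
          · exact ⟨hne, by rw [hdecomp]; exact mem_union.2 (Or.inl (hDsub h))⟩
          · exact ⟨hne, by
              rw [hdecomp]
              exact mem_union.2 (Or.inr (mem_image.2 ⟨B.erase n, h1, insert_erase h2⟩))⟩
        · rintro ⟨hne, hBH⟩
          rw [hdecomp] at hBH
          rcases mem_union.1 hBH with h | h
          · exact ⟨Or.inl ⟨hne, h⟩, hne⟩
          · obtain ⟨hBe, hBn⟩ := (mem_image_insert hgoodD).1 h
            exact ⟨Or.inr (Or.inr ⟨hBe, hBn⟩), hne⟩
    · -- (odd, odd)
      rw [if_pos h0] at hφ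
      rw [if_pos hD2] at hγ
      have hDne : D.Nonempty := card_pos.1 (by omega)
      have hED : ∅ ∈ D := hereditary_empty_mem heredD hDne
      have hEH0 : ∅ ∈ H0 := hDsub hED
      have hgD' : GoodF n (D.erase ∅) := goodF_erase hgoodD ∅
      have hsd : (D.erase ∅) \ (H0.erase ∅) = ∅ := by
        rw [sdiff_eq_empty_iff_subset]
        intro x hx
        exact mem_erase.2 ⟨ne_of_mem_erase hx, hDsub (mem_of_mem_erase hx)⟩
      obtain ⟨F, hF⟩ := (engine n ((H0.erase ∅).card + (D.erase ∅).card)).1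
        (H0.erase ∅) (D.erase ∅) φ γ le_rfl (goodF_erase hgood0 ∅) hgD' hφ hγ
        (by rw [hsd]; simp)
      rw [hsd, sdiff_empty] at hF
      have haU : (∅ : Finset α) ∉ (H0.erase ∅) ∪ (D.erase ∅) ∪ (D.erase ∅).image (insert n) := by
        simp only [mem_union]
        push_neg
        refine ⟨⟨notMem_erase _ _, notMem_erase _ _⟩, ?_⟩
        intro h
        exact notMem_empty n ((mem_image_insert hgD').1 h).2
      have hbU : insert n ∅ ∉ (H0.erase ∅) ∪ (D.erase ∅) ∪ (D.erase ∅).image (insert n) := by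
        simp only [mem_union]
        push_neg
        refine ⟨⟨?_, ?_⟩, ?_⟩
        · intro h; exact (goodF_erase hgood0 ∅) _ h (mem_insert_self n ∅)
        · intro h; exact hgD' _ h (mem_insert_self n ∅)
        · intro h
          have h2 := ((mem_image_insert hgD').1 h).1
          rw [erase_insert (notMem_empty n)] at h2
          exact notMem_erase ∅ D h2
      have hab : (∅ : Finset α) ≠ insert n ∅ := Ne.symm (insert_ne_empty n ∅)
      rw [if_neg (by omega)]
      refine ⟨_, isPairing_congr (pair_insert hF haU hbU hab (empty_inter _)) ?_⟩
      ext B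
      simp only [mem_insert, mem_union, mem_erase, mem_image_insert hgD',
        mem_image_insert hgoodD, or_assoc]
      rw [hdecomp]
      simp only [mem_union, mem_image_insert hgoodD]
      constructor
      · rintro (rfl | rfl | (⟨h1, h2⟩ | ⟨h1, h2⟩ | ⟨⟨h1, h2⟩, h3⟩))
        · exact Or.inl hEH0
        · exact Or.inr ⟨by rw [erase_insert (notMem_empty n)]; exact hED, mem_insert_self n ∅⟩
        · exact Or.inl h2
        · exact Or.inl (hDsub h2)
        · exact Or.inr ⟨h2, h3⟩
      · rintro (h | ⟨h1, h2⟩)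
        · by_cases hc : B = ∅
          · exact Or.inl hc
          · exact Or.inr (Or.inr (Or.inl ⟨hc, h⟩))
        · by_cases hc : B.erase n = ∅
          · refine Or.inr (Or.inl ?_)
            rw [← hc, insert_erase h2]
          · exact Or.inr (Or.inr (Or.inr (Or.inr ⟨⟨hc, h1⟩, h2⟩)))

end BergeAux

open Finset

/-- Berge's theorem: a hereditary family can be partitioned into pairwise
disjoint pairs `{A, f A}` with `A ∩ f A = ∅`, together with `∅` if `|H|` is odd. -/
theorem berge_partition {α : Type*} [DecidableEq α] (H : Finset (Finset α))
    (hH : ∀ A ∈ H, ∀ B ⊆ A, B ∈ H) :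
    ∃ f : Finset α → Finset α,
      (H.card % 2 = 1 → ∅ ∈ H) ∧
      ∀ A ∈ (if H.card % 2 = 1 then H.erase ∅ else H),
        f A ∈ (if H.card % 2 = 1 then H.erase ∅ else H) ∧
        f (f A) = A ∧ f A ≠ A ∧ A ∩ f A = ∅ := by
  obtain ⟨f, hf⟩ := BergeAux.main (H.sup id) H (fun A hA => Finset.le_sup (f := id) hA) hH
  refine ⟨f, ?_, hf⟩
  intro hodd
  refine BergeAux.hereditary_empty_mem hH ?_
  rw [← Finset.card_pos]
  omega
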